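/- Let G = ⊕_{i∈I} G_i be a direct sum of abelian groups such that for each index i there exists an index j ≠ i with G_i ≅ G_j. Then every characteristic subgroup of G is fully invariant. -/

import Mathlib

section Aux

variable {ι : Type*} [DecidableEq ι] (G : ι → Type*) [∀ i, AddCommGroup (G i)]

/-- Unipotent automorphism `x ↦ x + g (x i)` where `g` lands outside coordinate `i`. -/
def unipEquiv (i : ι) (g : G i →+ Π₀ i, G i) (hg : ∀ u, g u i = 0) :
    (Π₀ i, G i) ≃+ (Π₀ i, G i) where
  toFun x := x + g (x i)
  invFun x := x - g (x i)
  left_inv x := by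
    simp only [DFinsupp.add_apply, hg, add_zero]
    abel
  right_inv x := by
    simp only [DFinsupp.sub_apply, hg, sub_zero]
    abel
  map_add' x y := by
    simp only [DFinsupp.add_apply, map_add]
    abel

/-- Swap coordinates `i` and `j` via the isomorphism `θ`. -/
def swapFun (i j : ι) (θ : G i ≃+ G j) (x : Π₀ i, G i) : Π₀ i, G i :=
  x - DFinsupp.single i (x i) - DFinsupp.single j (x j)
    + DFinsupp.single i (θ.symm (x j)) + DFinsupp.single j (θ (x i))

variable {G}

lemma swapFun_apply_i (i j : ι) (hij : j ≠ i) (θ : G i ≃+ G j) (x : Π₀ i, G i) :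
    swapFun G i j θ x i = θ.symm (x j) := by
  simp [swapFun, DFinsupp.single_eq_same, DFinsupp.single_eq_of_ne (Ne.symm hij)]

lemma swapFun_apply_j (i j : ι) (hij : j ≠ i) (θ : G i ≃+ G j) (x : Π₀ i, G i) :
    swapFun G i j θ x j = θ (x i) := by
  simp [swapFun, DFinsupp.single_eq_same, DFinsupp.single_eq_of_ne hij]

lemma swapFun_invol (i j : ι) (hij : j ≠ i) (θ : G i ≃+ G j) (x : Π₀ i, G i) :
    swapFun G i j θ (swapFun G i j θ x) = x := by
  conv_lhs => rw [swapFun]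
  rw [swapFun_apply_i i j hij θ x, swapFun_apply_j i j hij θ x,
    θ.apply_symm_apply, θ.symm_apply_apply, swapFun]
  abel

/-- The swap automorphism. -/
def swapEquiv (i j : ι) (hij : j ≠ i) (θ : G i ≃+ G j) :
    (Π₀ i, G i) ≃+ (Π₀ i, G i) where
  toFun := swapFun G i j θ
  invFun := swapFun G i j θ
  left_inv x := swapFun_invol i j hij θ x
  right_inv x := swapFun_invol i j hij θ x
  map_add' x y := by
    simp only [swapFun, DFinsupp.add_apply, map_add, DFinsupp.single_add]
    abel

variable (H : AddSubgroup (Π₀ i, G i))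
variable (hH : ∀ φ : (Π₀ i, G i) ≃+ (Π₀ i, G i), ∀ x ∈ H, φ x ∈ H)

include hH

lemma offdiag_mem (i : ι) (g : G i →+ Π₀ i, G i) (hg : ∀ u, g u i = 0)
    (x : Π₀ i, G i) (hx : x ∈ H) : g (x i) ∈ H := by
  have h1 : unipEquiv G i g hg x ∈ H := hH _ x hx
  have h2 : g (x i) = unipEquiv G i g hg x - x := by
    show g (x i) = (x + g (x i)) - x
    abel
  rw [h2]
  exact H.sub_mem h1 hx

lemma diag_mem (i j : ι) (hij : j ≠ i) (θ : G i ≃+ G j) (a : G i →+ G i)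
    (x : Π₀ i, G i) (hx : x ∈ H) : DFinsupp.single i (a (x i)) ∈ H := by
  set g : G j →+ Π₀ i, G i :=
    (DFinsupp.singleAddHom G i).comp (a.comp (θ.symm : G j ≃+ G i).toAddMonoidHom) with hg_def
  have hg : ∀ v, g v j = 0 := fun v =>
    DFinsupp.single_eq_of_ne hij
  let ψ := swapEquiv i j hij θ
  let φ := ψ.trans (unipEquiv G j g hg)
  have hψx : ψ x ∈ H := hH ψ x hx
  have hφx : φ x ∈ H := hH φ x hx
  have key : DFinsupp.single i (a (x i)) = φ x - ψ x := by
    have hφ : φ x = ψ x + g (ψ x j) := rfl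
    have hj : (ψ x) j = θ (x i) := swapFun_apply_j i j hij θ x
    rw [hφ, hj]
    simp only [hg_def, AddMonoidHom.comp_apply, AddEquiv.coe_toAddMonoidHom,
      θ.symm_apply_apply, DFinsupp.singleAddHom_apply]
    abel
  rw [key]
  exact H.sub_mem hφx hψx

end Aux

/-- If `G = ⨁_{i∈I} G_i` and for each `i` there is `j ≠ i` with `G_i ≅ G_j`,
then every characteristic subgroup of `G` is fully invariant. -/
theorem stmt2 {ι : Type*} [DecidableEq ι] (G : ι → Type*) [∀ i, AddCommGroup (G i)]
    (hiso : ∀ i : ι, ∃ j : ι, j ≠ i ∧ Nonempty (G i ≃+ G j))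
    (H : AddSubgroup (Π₀ i, G i))
    (hH : ∀ φ : (Π₀ i, G i) ≃+ (Π₀ i, G i), ∀ x ∈ H, φ x ∈ H) :
    ∀ f : (Π₀ i, G i) →+ (Π₀ i, G i), ∀ x ∈ H, f x ∈ H := by
  classical
  intro f x hx
  have hsum : f x = ∑ i ∈ x.support, f (DFinsupp.single i (x i)) := by
    conv_lhs => rw [← DFinsupp.sum_single (f := x)]
    rw [DFinsupp.sum, map_sum]
  rw [hsum]
  refine AddSubgroup.sum_mem H fun i _ => ?_
  obtain ⟨j, hij, ⟨θ⟩⟩ := hiso i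
  set a : G i →+ G i :=
    (DFinsupp.evalAddMonoidHom i).comp (f.comp (DFinsupp.singleAddHom G i)) with ha_def
  set g : G i →+ Π₀ i, G i :=
    f.comp (DFinsupp.singleAddHom G i) - (DFinsupp.singleAddHom G i).comp a with hg_def
  have hg : ∀ u, g u i = 0 := by
    intro u
    have : DFinsupp.evalAddMonoidHom i (f (DFinsupp.single i u))
        = (f (DFinsupp.single i u)) i := rfl
    simp only [hg_def, ha_def, AddMonoidHom.sub_apply, AddMonoidHom.comp_apply,
      DFinsupp.sub_apply, DFinsupp.singleAddHom_apply, this, DFinsupp.single_eq_same, sub_self]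
  have hdecomp : f (DFinsupp.single i (x i)) = g (x i) + DFinsupp.single i (a (x i)) := by
    simp only [hg_def, AddMonoidHom.sub_apply, AddMonoidHom.comp_apply,
      DFinsupp.singleAddHom_apply]
    abel
  rw [hdecomp]
  exact H.add_mem (offdiag_mem H hH i g hg x hx) (diag_mem H hH i j hij θ a x hx)
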